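/- Let φ be a group homomorphism from G_k to a finite commutative group G. Then there exist finitely many subsets A_1,…,A_m of {1,…,k+1} such that the kernel of φ equals the intersection H_{A_1} ∩ … ∩ H_{A_m}. -/

import Mathlib

open scoped Classical

/-- `Gk k` is the free product of `k+1` copies of the cyclic group of order two. -/
abbrev Gk (k : ℕ) : Type :=
  Monoid.CoprodI (fun _ : Fin (k + 1) => Multiplicative (ZMod 2))

/-- The canonical generator `a_i` of `Gk k`. -/
def gen (k : ℕ) (i : Fin (k + 1)) : Gk k :=
  Monoid.CoprodI.of (M := fun _ : Fin (k + 1) => Multiplicative (ZMod 2)) (i := i)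
    (Multiplicative.ofAdd (1 : ZMod 2))

/-- The homomorphism `φ_A : Gk k →* Multiplicative (ZMod 2)` sending `a_i` to
`Multiplicative.ofAdd 1` if `i ∈ A` and to `1` otherwise. -/
noncomputable def phi (k : ℕ) (A : Set (Fin (k + 1))) : Gk k →* Multiplicative (ZMod 2) :=
  Monoid.CoprodI.lift (fun i => if i ∈ A then MonoidHom.id (Multiplicative (ZMod 2)) else 1)

/-- The subgroup `H_A = ker φ_A`. -/
noncomputable def HA (k : ℕ) (A : Set (Fin (k + 1))) : Subgroup (Gk k) :=
  (phi k A).ker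

lemma multZMod2_cases (x : Multiplicative (ZMod 2)) :
    x = 1 ∨ x = Multiplicative.ofAdd 1 := by
  revert x; decide

lemma phi_gen (k : ℕ) (A : Set (Fin (k + 1))) (i : Fin (k + 1)) :
    phi k A (gen k i) = if i ∈ A then Multiplicative.ofAdd (1 : ZMod 2) else 1 := by
  unfold phi gen
  rw [Monoid.CoprodI.lift_of]
  split_ifs <;> rfl

/-- Every homomorphism `Gk k →* Multiplicative (ZMod 2)` is of the form `phi k A`. -/
lemma hom_eq_phi {k : ℕ} (ψ : Gk k →* Multiplicative (ZMod 2)) :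
    ψ = phi k {i | ψ (gen k i) = Multiplicative.ofAdd 1} := by
  apply Monoid.CoprodI.ext_hom
  intro i
  refine MonoidHom.ext fun x => ?_
  rcases multZMod2_cases x with rfl | rfl
  · simp
  · show ψ (gen k i) = phi k _ (gen k i)
    rw [phi_gen]
    split_ifs with hi
    · exact hi
    · rcases multZMod2_cases (ψ (gen k i)) with h1 | h1
      · exact h1
      · exact absurd h1 hi

lemma sq_image_eq_one {k : ℕ} {G : Type} [CommGroup G] (φ : Gk k →* G) (x : Gk k) :
    (φ x) ^ 2 = 1 := by
  induction x using Monoid.CoprodI.induction_on with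
  | one => simp
  | of i m =>
      have hm : m ^ 2 = 1 := by
        rcases multZMod2_cases m with rfl | rfl <;> decide
      rw [← map_pow, ← map_pow, hm]
      simp
  | mul a b ha hb =>
      rw [map_mul, mul_pow, ha, hb, mul_one]

theorem stmt6 (k : ℕ) (G : Type) [CommGroup G] [Finite G]
    (φ : Gk k →* G) :
    ∃ (m : ℕ) (A : Fin m → Set (Fin (k + 1))),
      φ.ker = ⨅ i, HA k (A i) := by
  classical
  -- the finite set of all subsets whose H_A contains ker φ
  set S : Finset (Set (Fin (k + 1))) :=
    Finset.univ.filter (fun A => φ.ker ≤ HA k A) with hS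
  refine ⟨S.card, fun i => (S.equivFin.symm i : Set (Fin (k + 1))), ?_⟩
  apply le_antisymm
  · refine le_iInf fun i => ?_
    have hmem := (S.equivFin.symm i).2
    exact (Finset.mem_filter.mp hmem).2
  · intro x hx
    by_contra hxk
    -- build a character separating φ x from 1
    have hφx : φ x ≠ 1 := hxk
    -- the range of φ, as an elementary abelian 2-group
    let H := φ.range
    have hsq : ∀ h : H, h * h = 1 := by
      rintro ⟨h, z, rfl⟩
      ext
      have := sq_image_eq_one φ z
      simpa [sq] using this
    letI : Module (ZMod 2) (Additive H) :=
      AddCommGroup.zmodModule (by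
        intro a
        rw [two_nsmul]
        exact hsq a.toMul)
    set v : Additive H := Additive.ofMul (φ.rangeRestrict x) with hv
    have hvne : v ≠ 0 := by
      intro h0
      apply hφx
      have : φ.rangeRestrict x = 1 := h0
      have := congrArg (Subtype.val) this
      simpa using this
    -- find a linear functional nonzero on v
    obtain ⟨f, hf⟩ : ∃ f : Additive H →ₗ[ZMod 2] ZMod 2, f v ≠ 0 := by
      let b := Module.Basis.ofVectorSpace (ZMod 2) (Additive H)
      have : b.repr v ≠ 0 := fun h => hvne (by simpa using congrArg b.repr.symm h)
      obtain ⟨j, hj⟩ := Finsupp.ne_iff.mp this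
      exact ⟨b.coord j, by simpa using hj⟩
    -- turn it into a monoid hom
    let χ : H →* Multiplicative (ZMod 2) :=
      MonoidHom.mk' (fun h => Multiplicative.ofAdd (f (Additive.ofMul h)))
        (by
          intro a b
          show Multiplicative.ofAdd (f (Additive.ofMul a + Additive.ofMul b)) = _
          rw [map_add, ofAdd_add])
    let ψ : Gk k →* Multiplicative (ZMod 2) := χ.comp φ.rangeRestrict
    have hker : φ.ker ≤ ψ.ker := by
      intro z hz
      have h1 : φ.rangeRestrict z = 1 := by
        ext; simpa using hz
      show χ (φ.rangeRestrict z) = 1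
      rw [h1, map_one]
    have hψx : ψ x ≠ 1 := by
      show Multiplicative.ofAdd (f v) ≠ 1
      intro h
      exact hf (by simpa using congrArg Multiplicative.toAdd h)
    set A₀ : Set (Fin (k + 1)) := {i | ψ (gen k i) = Multiplicative.ofAdd 1} with hA₀
    have hψ : ψ = phi k A₀ := hom_eq_phi ψ
    have hA₀mem : A₀ ∈ S := by
      refine Finset.mem_filter.mpr ⟨Finset.mem_univ _, ?_⟩
      intro z hz
      have := hker hz
      rwa [MonoidHom.mem_ker, hψ] at this
    -- x belongs to every HA in the family, in particular to HA k A₀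
    have hxA : x ∈ HA k A₀ := by
      have := hx
      rw [Subgroup.mem_iInf] at this
      have h := this (S.equivFin ⟨A₀, hA₀mem⟩)
      simpa using h
    apply hψx
    rw [hψ]
    exact hxA
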